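/- Let p ∈ (0,1)^n and let x be a mixed Hider strategy with one target. Then any search σ that searches the locations in non-increasing order of the index x_i p_i/(1−p_i) maximizes the expected probability of rescue P(x,σ) = Σ_{i=1}^n x_{σ(i)} ∏_{j=1}^i p_{σ(j)} over all searches: for every search τ, P(x,τ) ≤ P(x,σ). -/

import Mathlib

/-- The probability of rescue in the search and rescue game:
`P(x,σ) = Σ_i x_{σ(i)} ∏_{j≤i} p_{σ(j)}`. -/
def rescueP {n : ℕ} (p x : Fin n → ℝ) (σ : Equiv.Perm (Fin n)) : ℝ :=
  ∑ i : Fin n, x (σ i) * ∏ j ∈ Finset.univ.filter (fun t : Fin n => t ≤ i), p (σ j)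

namespace RescueAux

/-- Payoff of a list of (hiding prob, success prob) pairs. -/
def F : List (ℝ × ℝ) → ℝ
  | [] => 0
  | e :: l => e.2 * (e.1 + F l)

/-- The Gittins-style index. -/
noncomputable def idx (e : ℝ × ℝ) : ℝ := e.1 * e.2 / (1 - e.2)

lemma F_cons_le (e : ℝ × ℝ) (he : 0 < e.2) {l l' : List (ℝ × ℝ)} (h : F l ≤ F l') :
    F (e :: l) ≤ F (e :: l') := by
  simp only [F]
  nlinarith

lemma F_swap (a b : ℝ × ℝ) (ha : 0 < a.2 ∧ a.2 < 1) (hb : 0 < b.2 ∧ b.2 < 1)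
    (h : idx a ≤ idx b) (l : List (ℝ × ℝ)) :
    F (a :: b :: l) ≤ F (b :: a :: l) := by
  simp only [F]
  have h1 : 0 < 1 - a.2 := by linarith [ha.2]
  have h2 : 0 < 1 - b.2 := by linarith [hb.2]
  have h3 := (div_le_div_iff₀ h1 h2).mp h
  nlinarith

lemma F_middle (a : ℝ × ℝ) (ha : 0 < a.2 ∧ a.2 < 1) :
    ∀ l₁ l₂ : List (ℝ × ℝ), (∀ b ∈ l₁, 0 < b.2 ∧ b.2 < 1) →
      (∀ b ∈ l₁, idx b ≤ idx a) → F (l₁ ++ a :: l₂) ≤ F (a :: (l₁ ++ l₂))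
  | [], l₂, _, _ => le_refl _
  | b :: l₁, l₂, hq, hidx => by
    have h1 : F (l₁ ++ a :: l₂) ≤ F (a :: (l₁ ++ l₂)) :=
      F_middle a ha l₁ l₂ (fun c hc => hq c (List.mem_cons_of_mem _ hc))
        (fun c hc => hidx c (List.mem_cons_of_mem _ hc))
    have h2 : F (b :: (l₁ ++ a :: l₂)) ≤ F (b :: a :: (l₁ ++ l₂)) :=
      F_cons_le b (hq b (List.mem_cons_self)).1 h1
    have h3 : F (b :: a :: (l₁ ++ l₂)) ≤ F (a :: b :: (l₁ ++ l₂)) :=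
      F_swap b a (hq b (List.mem_cons_self)) ha (hidx b (List.mem_cons_self)) _
    simpa using h2.trans h3

lemma F_perm_le : ∀ l m : List (ℝ × ℝ), m.Perm l →
    (∀ b ∈ l, 0 < b.2 ∧ b.2 < 1) →
    l.Pairwise (fun a b => idx b ≤ idx a) → F m ≤ F l
  | [], m, hperm, _, _ => by
    rw [List.perm_nil.mp hperm]
  | a :: t, m, hperm, hq, hsort => by
    have ham : a ∈ m := hperm.mem_iff.mpr (List.mem_cons_self)
    obtain ⟨l₁, l₂, rfl⟩ := List.append_of_mem ham
    have hqm : ∀ b ∈ l₁ ++ a :: l₂, 0 < b.2 ∧ b.2 < 1 := fun b hb => hq b (hperm.subset hb)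
    have hidxm : ∀ b ∈ l₁ ++ a :: l₂, idx b ≤ idx a := by
      intro b hb
      rcases List.mem_cons.mp (hperm.subset hb) with h | h
      · rw [h]
      · exact (List.pairwise_cons.mp hsort).1 b h
    have h1 : F (l₁ ++ a :: l₂) ≤ F (a :: (l₁ ++ l₂)) :=
      F_middle a (hqm a (by simp)) l₁ l₂
        (fun b hb => hqm b (List.mem_append_left _ hb))
        (fun b hb => hidxm b (List.mem_append_left _ hb))
    have hperm' : (l₁ ++ l₂).Perm t :=
      (List.perm_middle.symm.trans hperm).cons_inv
    have h2 : F (l₁ ++ l₂) ≤ F t :=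
      F_perm_le t (l₁ ++ l₂) hperm'
        (fun b hb => hq b (List.mem_cons_of_mem _ hb))
        (List.pairwise_cons.mp hsort).2
    exact h1.trans (F_cons_le a (hq a (List.mem_cons_self)).1 h2)

lemma F_ofFn (n : ℕ) (y q : Fin n → ℝ) :
    F (List.ofFn (fun k => (y k, q k))) =
      ∑ i : Fin n, y i * ∏ j ∈ Finset.univ.filter (fun t : Fin n => t ≤ i), q j := by
  induction n with
  | zero => simp [F]
  | succ n ih =>
    rw [List.ofFn_succ]
    simp only [F]
    rw [ih (fun k => y k.succ) (fun k => q k.succ), Fin.sum_univ_succ]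
    have hprod0 : ∏ j ∈ Finset.univ.filter (fun t : Fin (n+1) => t ≤ 0), q j = q 0 := by
      rw [Finset.prod_filter, Fin.prod_univ_succ]
      simp [Fin.le_zero_iff, Fin.succ_ne_zero]
    have hprod : ∀ i : Fin n,
        ∏ j ∈ Finset.univ.filter (fun t : Fin (n+1) => t ≤ i.succ), q j =
          q 0 * ∏ j ∈ Finset.univ.filter (fun t : Fin n => t ≤ i), q j.succ := by
      intro i
      rw [Finset.prod_filter, Fin.prod_univ_succ, Finset.prod_filter]
      simp [Fin.succ_le_succ_iff]
    rw [hprod0]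
    simp only [hprod]
    rw [mul_add, Finset.mul_sum]
    congr 1
    · ring
    · exact Finset.sum_congr rfl fun i _ => by ring

lemma ofFn_perm (n : ℕ) (e : Fin n → ℝ × ℝ) (τ : Equiv.Perm (Fin n)) :
    (List.ofFn fun k => e (τ k)).Perm (List.ofFn e) := by
  have h1 : ((List.finRange n).map τ).Perm (List.finRange n) := by
    refine (List.perm_ext_iff_of_nodup
      ((List.nodup_finRange n).map τ.injective) (List.nodup_finRange n)).mpr ?_
    intro a
    simp only [List.mem_map, List.mem_finRange, iff_true]
    exact ⟨τ.symm a, trivial, τ.apply_symm_apply a⟩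
  have := h1.map e
  simpa [List.ofFn_eq_map, List.map_map, Function.comp_def] using this

end RescueAux

/-- any search in non-increasing order of the index `x_i p_i/(1−p_i)`
maximizes the expected probability of rescue. -/
theorem rescue_index_optimal
    {n : ℕ} (p : Fin n → ℝ) (hp : ∀ i, 0 < p i ∧ p i < 1)
    (x : Fin n → ℝ) (hx : ∀ i, 0 ≤ x i) (hxsum : ∑ i, x i = 1)
    (σ : Equiv.Perm (Fin n))
    (hσ : ∀ s t : Fin n, s ≤ t →
      x (σ t) * p (σ t) / (1 - p (σ t)) ≤ x (σ s) * p (σ s) / (1 - p (σ s))) :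
    ∀ τ : Equiv.Perm (Fin n), rescueP p x τ ≤ rescueP p x σ := by
  intro τ
  open RescueAux in
  have hR : ∀ π : Equiv.Perm (Fin n),
      rescueP p x π = F (List.ofFn fun k => ((fun i => (x i, p i)) (π k))) := by
    intro π
    rw [show (List.ofFn fun k => ((fun i => (x i, p i)) (π k))) =
        List.ofFn fun k => (x (π k), p (π k)) from rfl, F_ofFn]
    rfl
  rw [hR σ, hR τ]
  set e : Fin n → ℝ × ℝ := fun i => (x i, p i) with he
  have hperm : (List.ofFn fun k => e (τ k)).Perm (List.ofFn fun k => e (σ k)) :=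
    (ofFn_perm n e τ).trans (ofFn_perm n e σ).symm
  refine F_perm_le _ _ hperm ?_ ?_
  · intro b hb
    rw [List.mem_ofFn] at hb
    obtain ⟨k, hk⟩ := hb
    rw [← hk]
    exact hp (σ k)
  · rw [List.pairwise_ofFn]
    intro i j hij
    exact hσ i j hij.le
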